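/- arXiv:1503.01245 — 2 statements merged into one kernel-verified Lean document; each statement's English description precedes it below -/
import Mathlib

section
/- Let u, φ, g, c be as above with φ∞ < 1/c, and define v(x) = u(g⁻¹(x)) and ψ(x) = x·v(x). Then v is continuous and non-increasing, ψ is increasing, and lim_{x→∞} ψ(x) = φ∞/(1 - c·φ∞). -/
open Set Filter

theorem stmt_1 (u φ g ginv v ψ : ℝ → ℝ) (c φinf : ℝ)
    (hc0 : 0 < c) (hc1 : c < 1)
    (hu_pos : ∀ x ∈ Ici (0:ℝ), 0 < u x)
    (hu_cont : ContinuousOn u (Ici 0))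
    (hu_antitone : AntitoneOn u (Ici 0))
    (hφ : ∀ x, φ x = x * u x)
    (hφ_mono : StrictMonoOn φ (Ici 0))
    (hφ_lim : Tendsto φ atTop (nhds φinf))
    (hφinf : φinf < 1 / c)
    (hg : ∀ x, g x = x / (1 - c * φ x))
    (hg_bij : Set.BijOn g (Ici 0) (Ici 0))
    (hginv_left : ∀ x ∈ Ici (0:ℝ), ginv (g x) = x)
    (hginv_right : ∀ x ∈ Ici (0:ℝ), g (ginv x) = x)
    (hginv_maps : ∀ x ∈ Ici (0:ℝ), ginv x ∈ Ici (0:ℝ))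
    (hv : ∀ x, v x = u (ginv x))
    (hψ : ∀ x, ψ x = x * v x) :
    ContinuousOn v (Ici 0) ∧ AntitoneOn v (Ici 0) ∧ StrictMonoOn ψ (Ici 0) ∧
      Tendsto ψ atTop (nhds (φinf / (1 - c * φinf))) := by
  have h0 : (0:ℝ) ∈ Ici (0:ℝ) := Set.mem_Ici.mpr (le_refl 0)
  -- φ x ≤ φinf for x ≥ 0
  have hφle : ∀ x ∈ Ici (0:ℝ), φ x ≤ φinf := by
    intro x hx
    refine ge_of_tendsto hφ_lim ?_
    filter_upwards [eventually_ge_atTop (max x 0)] with y hy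
    exact (hφ_mono.monotoneOn) hx (le_trans (le_max_right x 0) hy)
      (le_trans (le_max_left x 0) hy)
  have hcφinf : c * φinf < 1 := by
    have := (lt_div_iff₀ hc0).mp hφinf
    linarith
  have hdinf : 0 < 1 - c * φinf := by linarith
  have hden : ∀ x ∈ Ici (0:ℝ), 0 < 1 - c * φ x := by
    intro x hx
    have := hφle x hx
    nlinarith
  -- g is strictly monotone on Ici 0
  have hg_mono : StrictMonoOn g (Ici 0) := by
    intro x hx y hy hxy
    have hφxy : φ x < φ y := hφ_mono hx hy hxy
    have dx := hden x hx
    have dy := hden y hy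
    have hx0 : (0:ℝ) ≤ x := hx
    rw [hg, hg, div_lt_div_iff₀ dx dy]
    nlinarith [mul_pos (sub_pos.mpr hxy) dx,
      mul_nonneg (mul_nonneg hc0.le hx0) (sub_pos.mpr hφxy).le]
  -- ginv is strictly monotone on Ici 0
  have hginv_mono : StrictMonoOn ginv (Ici 0) := by
    intro x hx y hy hxy
    by_contra h
    push_neg at h
    have := hg_mono.monotoneOn (hginv_maps y hy) (hginv_maps x hx) h
    rw [hginv_right x hx, hginv_right y hy] at this
    exact absurd this (not_le.mpr hxy)
  have hg0 : g 0 = 0 := by rw [hg]; simp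
  have hginv0 : ginv 0 = 0 := by
    have := hginv_left 0 h0
    rwa [hg0] at this
  -- continuity of ginv on Ici 0
  have hginv_cont : ContinuousOn ginv (Ici 0) := by
    intro a ha
    have hright : ContinuousWithinAt ginv (Ici a) a := by
      apply StrictMonoOn.continuousWithinAt_right_of_surjOn hginv_mono
      · exact mem_of_superset self_mem_nhdsWithin (Ici_subset_Ici.mpr ha)
      · intro b hb
        have hb0 : (0:ℝ) ≤ b := le_of_lt (lt_of_le_of_lt (hginv_maps a ha) hb)
        exact ⟨g b, hg_bij.mapsTo hb0, hginv_left b hb0⟩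
    rcases eq_or_lt_of_le (Set.mem_Ici.mp ha) with h0a | h0a
    · subst h0a; exact hright
    · have hleft : ContinuousWithinAt ginv (Iic a) a := by
        apply StrictMonoOn.continuousWithinAt_left_of_exists_between hginv_mono
        · exact mem_nhdsWithin.mpr ⟨Ioi 0, isOpen_Ioi, h0a, fun z hz => Set.mem_Ici.mpr (le_of_lt hz.1)⟩
        · intro b hb
          have hga : 0 < ginv a := by
            have := hginv_mono h0 ha h0a
            rwa [hginv0] at this
          have hmb : max b 0 ∈ Ici (0:ℝ) := le_max_right b 0
          refine ⟨g (max b 0), hg_bij.mapsTo hmb, ?_⟩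
          rw [hginv_left _ hmb]
          exact ⟨le_max_left b 0, max_lt hb hga⟩
      exact (hleft.union hright).mono fun x _ => (le_total x a).elim Or.inl Or.inr
  -- continuity of v
  have hv_cont : ContinuousOn v (Ici 0) :=
    (hu_cont.comp hginv_cont hginv_maps).congr fun x _ => hv x
  -- v antitone
  have hv_anti : AntitoneOn v (Ici 0) := by
    intro x hx y hy hxy
    rw [hv, hv]
    rcases eq_or_lt_of_le hxy with rfl | hxy'
    · exact le_refl _
    · exact hu_antitone (hginv_maps x hx) (hginv_maps y hy)
        (le_of_lt (hginv_mono hx hy hxy'))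
  -- key formula for ψ
  have hψh : ∀ x ∈ Ici (0:ℝ), ψ x = φ (ginv x) / (1 - c * φ (ginv x)) := by
    intro x hx
    have ht := hginv_maps x hx
    have hd := hden _ ht
    have h1 := hginv_right x hx
    rw [hg, div_eq_iff hd.ne'] at h1
    have hφg : φ (ginv x) = ginv x * u (ginv x) := hφ _
    rw [hψ, hv, eq_div_iff hd.ne']
    linear_combination -hφg - u (ginv x) * h1
  -- ψ strictly monotone
  have hψ_mono : StrictMonoOn ψ (Ici 0) := by
    intro x hx y hy hxy
    rw [hψh x hx, hψh y hy]
    have hst : φ (ginv x) < φ (ginv y) :=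
      hφ_mono (hginv_maps x hx) (hginv_maps y hy) (hginv_mono hx hy hxy)
    have hds := hden _ (hginv_maps x hx)
    have hdt := hden _ (hginv_maps y hy)
    rw [div_lt_div_iff₀ hds hdt]
    nlinarith
  -- ginv tends to atTop
  have hginv_top : Tendsto ginv atTop atTop := by
    rw [tendsto_atTop]
    intro b
    filter_upwards [eventually_ge_atTop (g (max b 0))] with x hx
    have hmb : max b 0 ∈ Ici (0:ℝ) := le_max_right b 0
    have hgb : g (max b 0) ∈ Ici (0:ℝ) := hg_bij.mapsTo hmb
    have hx0 : x ∈ Ici (0:ℝ) := le_trans hgb hx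
    have hle := hginv_mono.monotoneOn hgb hx0 hx
    rw [hginv_left _ hmb] at hle
    exact le_trans (le_max_left b 0) hle
  -- limit of ψ
  have hcomp : Tendsto (fun x => φ (ginv x)) atTop (nhds φinf) := hφ_lim.comp hginv_top
  have hcont : Tendsto (fun s => s / (1 - c * s)) (nhds φinf)
      (nhds (φinf / (1 - c * φinf))) := by
    have : ContinuousAt (fun s => s / (1 - c * s)) φinf :=
      ContinuousAt.div continuousAt_id
        (continuousAt_const.sub (continuousAt_const.mul continuousAt_id)) hdinf.ne'
    exact this.tendsto
  have hlim : Tendsto ψ atTop (nhds (φinf / (1 - c * φinf))) := by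
    refine Tendsto.congr' ?_ (hcont.comp hcomp)
    filter_upwards [eventually_ge_atTop (0:ℝ)] with x hx
    exact (hψh x hx).symm
  exact ⟨hv_cont, hv_anti, hψ_mono, hlim⟩
end

section
/- Let B ∈ ℂ^{N×N} be Hermitian with λ_min(B) ≥ ξ > 0, and write B = (B - (ξ/2)·I) + (ξ/2)·I with B - (ξ/2)·I positive definite. Then for any vector x ∈ ℂ^N and the rank-one update B' = B + v·x·x† with v ≥ 0, one has |tr(B⁻¹) - tr(B'⁻¹)| ≤ 2/ξ. -/
open Matrix ComplexOrder

-- helper lemmas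
lemma mul_vecMulVec' {N : ℕ} (C : Matrix (Fin N) (Fin N) ℂ) (a b : Fin N → ℂ) :
    C * vecMulVec a b = vecMulVec (C *ᵥ a) b := by
  ext i j
  simp [mul_apply, vecMulVec_apply, mulVec, dotProduct, Finset.sum_mul, mul_assoc]

lemma vecMulVec_mul' {N : ℕ} (a b : Fin N → ℂ) (C : Matrix (Fin N) (Fin N) ℂ) :
    vecMulVec a b * C = vecMulVec a (b ᵥ* C) := by
  ext i j
  simp [mul_apply, vecMulVec_apply, vecMul, dotProduct, Finset.mul_sum, mul_assoc]

lemma trace_vecMulVec' {N : ℕ} (a b : Fin N → ℂ) :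
    (vecMulVec a b).trace = a ⬝ᵥ b := by
  simp [trace, diag, vecMulVec_apply, dotProduct]

lemma vecMulVec_mulVec' {N : ℕ} (a b y : Fin N → ℂ) :
    (vecMulVec a b) *ᵥ y = (b ⬝ᵥ y) • a := by
  ext i
  simp [vecMulVec_apply, mulVec, dotProduct, Finset.mul_sum, mul_assoc, mul_comm, mul_left_comm]


lemma posSemidef_vecMulVec_star {N : ℕ} (x : Fin N → ℂ) :
    (vecMulVec x (star x)).PosSemidef := by
  refine posSemidef_iff_dotProduct_mulVec.mpr ⟨?_, ?_⟩
  · ext i j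
    simp [conjTranspose_apply, vecMulVec_apply, mul_comm]
  · intro y
    rw [vecMulVec_mulVec', dotProduct_smul]
    have h1 : star y ⬝ᵥ x = star (star x ⬝ᵥ y) := by
      simp [dotProduct, mul_comm]
    rw [smul_eq_mul, h1, mul_comm]
    exact star_mul_self_nonneg (star x ⬝ᵥ y)

lemma posSemidef_sub_smul_one {N : ℕ} (B : Matrix (Fin N) (Fin N) ℂ) (ξ : ℝ)
    (hB : B.IsHermitian) (heig : ∀ i, ξ ≤ hB.eigenvalues i) :
    (B - (ξ:ℂ) • 1).PosSemidef := by
  have hU := (Matrix.mem_unitaryGroup_iff).mp (hB.eigenvectorUnitary).2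
  have hdiag : (Matrix.diagonal (fun i => ((hB.eigenvalues i - ξ : ℝ) : ℂ))).PosSemidef := by
    refine Matrix.PosSemidef.diagonal ?_
    intro i
    show (0:ℂ) ≤ ((hB.eigenvalues i - ξ : ℝ) : ℂ)
    rw [Complex.zero_le_real]
    linarith [heig i]
  have key : (hB.eigenvectorUnitary : Matrix (Fin N) (Fin N) ℂ) *
      (Matrix.diagonal (fun i => ((hB.eigenvalues i - ξ : ℝ) : ℂ))) *
      (star (hB.eigenvectorUnitary : Matrix (Fin N) (Fin N) ℂ)) = B - (ξ:ℂ) • 1 := by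
    have hd : (Matrix.diagonal (fun i => ((hB.eigenvalues i - ξ : ℝ) : ℂ)))
        = Matrix.diagonal (RCLike.ofReal ∘ hB.eigenvalues) - (ξ:ℂ) • 1 := by
      ext i j
      by_cases h : i = j <;> simp [h, Matrix.diagonal_apply, Matrix.one_apply, Complex.ofReal_sub]
    rw [hd, Matrix.mul_sub, Matrix.sub_mul]
    conv_rhs => rw [hB.spectral_theorem, Unitary.conjStarAlgAut_apply]
    congr 1
    rw [Matrix.mul_smul, Matrix.smul_mul, mul_one, hU]
  rw [← key]
  have := hdiag.mul_mul_conjTranspose_same (hB.eigenvectorUnitary : Matrix (Fin N) (Fin N) ℂ)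
  simpa [Matrix.star_eq_conjTranspose] using this

theorem stmt_19 (N : ℕ) (B : Matrix (Fin N) (Fin N) ℂ) (ξ : ℝ) (x : Fin N → ℂ) (v : ℝ)
    (hB : B.IsHermitian) (hξ : 0 < ξ)
    (heig : ∀ i, ξ ≤ hB.eigenvalues i)
    (hv : 0 ≤ v) :
    ‖(B⁻¹).trace - ((B + v • vecMulVec x (star x))⁻¹).trace‖ ≤ 2 / ξ := by
  set P := vecMulVec x (star x) with hPdef
  set M := B + v • P with hMdef
  have hPpsd := posSemidef_vecMulVec_star x
  have hBsub := posSemidef_sub_smul_one B ξ hB heig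
  -- B is positive definite
  have hξ1 : ((ξ:ℂ) • (1 : Matrix (Fin N) (Fin N) ℂ)).PosDef := by
    have h1 : ((ξ:ℂ) • (1 : Matrix (Fin N) (Fin N) ℂ))
        = Matrix.diagonal (fun _ => (ξ:ℂ)) := by
      ext i j; by_cases h : i = j <;> simp [h, Matrix.one_apply]
    rw [h1, Matrix.posDef_diagonal_iff]
    intro i
    exact_mod_cast hξ
  have hBpd : B.PosDef := by
    have h := Matrix.PosDef.posSemidef_add hBsub hξ1
    simpa using h
  -- v • P is positive semidefinite
  have hvP : (v • P).PosSemidef := by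
    refine posSemidef_iff_dotProduct_mulVec.mpr ⟨?_, ?_⟩
    · ext i j
      have h1 := congrFun (congrFun hPpsd.1 i) j
      simp only [conjTranspose_apply] at h1 ⊢
      simp only [Matrix.smul_apply, star_smul, star_trivial, hPdef, h1]
    · intro y
      have h0 := hPpsd.dotProduct_mulVec_nonneg y
      rw [smul_mulVec, dotProduct_smul, Complex.real_smul]
      exact mul_nonneg (by exact_mod_cast hv) h0
  have hMpd : M.PosDef := hBpd.add_posSemidef hvP
  have hBdet : IsUnit B.det := hBpd.det_pos.ne'.isUnit
  have hMdet : IsUnit M.det := hMpd.det_pos.ne'.isUnit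
  -- basic vectors and scalars
  set u := B⁻¹ *ᵥ x with hudef
  set c := star x ⬝ᵥ u with hcdef
  have hc0 : (0:ℂ) ≤ c := hBpd.posSemidef.inv.dotProduct_mulVec_nonneg x
  set cr := c.re with hcrdef
  have hcr0 : 0 ≤ cr := (Complex.le_def.mp hc0).1
  have hcre : c = (cr:ℂ) := by
    rw [Complex.ext_iff]
    constructor
    · simp [hcrdef]
    · simpa using ((Complex.le_def.mp hc0).2).symm
  set s := star u ⬝ᵥ u with hsdef
  have hs0 : (0:ℂ) ≤ s := by
    exact dotProduct_star_self_nonneg u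
  set sr := s.re with hsrdef
  have hsr0 : 0 ≤ sr := (Complex.le_def.mp hs0).1
  have hsre : s = (sr:ℂ) := by
    rw [Complex.ext_iff]
    constructor
    · simp [hsrdef]
    · simpa using ((Complex.le_def.mp hs0).2).symm
  -- B *ᵥ u = x
  have hxu : B *ᵥ u = x := by
    rw [hudef, mulVec_mulVec, Matrix.mul_nonsing_inv _ hBdet, one_mulVec]
  -- quadratic form bound : ξ * sr ≤ cr
  have hqc : c = star u ⬝ᵥ B *ᵥ u := by
    have h1 : star u ᵥ* B = star x := by
      calc star u ᵥ* B = star u ᵥ* Bᴴᴴ := by rw [conjTranspose_conjTranspose]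
        _ = star (Bᴴ *ᵥ u) := (star_mulVec _ _).symm
        _ = star (B *ᵥ u) := by rw [hB.eq]
        _ = star x := by rw [hxu]
    rw [dotProduct_mulVec, h1, hcdef]
  have hkey : ξ * sr ≤ cr := by
    have h0 := hBsub.dotProduct_mulVec_nonneg u
    rw [sub_mulVec, dotProduct_sub, smul_mulVec, one_mulVec, dotProduct_smul] at h0
    rw [← hqc, smul_eq_mul] at h0
    have := (Complex.le_def.mp h0).1
    simp only [Complex.sub_re, Complex.zero_re, Complex.mul_re, Complex.ofReal_re,
      Complex.ofReal_im, hsre, hcre] at this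
    simp only [Complex.ofReal_re, Complex.ofReal_im, mul_zero, zero_mul, sub_zero] at this
    linarith
  -- Sherman-Morrison : M⁻¹ *ᵥ x
  have hone : (0:ℝ) < 1 + v * cr := by nlinarith
  have hMu : M *ᵥ u = ((1 + v * cr : ℝ) : ℂ) • x := by
    rw [hMdef, add_mulVec, hxu, smul_mulVec, hPdef, vecMulVec_mulVec']
    rw [← hcdef, hcre]
    ext i
    simp [Complex.real_smul]
    ring
  have hMx : M⁻¹ *ᵥ x = (((1 + v * cr : ℝ)⁻¹ : ℝ) : ℂ) • u := by
    have h1 : M⁻¹ *ᵥ (M *ᵥ u) = u := by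
      rw [mulVec_mulVec, Matrix.nonsing_inv_mul _ hMdet, one_mulVec]
    rw [hMu, mulVec_smul] at h1
    rw [← h1, smul_smul]
    norm_cast
    rw [inv_mul_cancel₀ hone.ne', one_smul]
  -- trace identity
  have htr : (B⁻¹).trace - (M⁻¹).trace = ((v * (1 + v * cr)⁻¹ * sr : ℝ) : ℂ) := by
    have hid : B⁻¹ - M⁻¹ = B⁻¹ * (v • P) * M⁻¹ := by
      have h2 : B⁻¹ * (v • P) * M⁻¹ = B⁻¹ * M * M⁻¹ - B⁻¹ * B * M⁻¹ := by
        rw [← Matrix.sub_mul, ← Matrix.mul_sub, hMdef]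
        congr 2
        abel
      rw [h2, Matrix.mul_assoc B⁻¹ M M⁻¹, Matrix.mul_nonsing_inv _ hMdet, Matrix.mul_one,
        Matrix.nonsing_inv_mul _ hBdet, Matrix.one_mul]
    have h3 : (B⁻¹).trace - (M⁻¹).trace = (B⁻¹ * (v • P) * M⁻¹).trace := by
      rw [← hid, trace_sub]
    rw [h3]
    have h4 : B⁻¹ * (v • P) * M⁻¹ = v • (B⁻¹ * P * M⁻¹) := by
      rw [Matrix.mul_smul, Matrix.smul_mul]
    rw [h4, trace_smul, hPdef, mul_vecMulVec', vecMulVec_mul', trace_vecMulVec']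
    have h5 : star x ᵥ* M⁻¹ = star (M⁻¹ *ᵥ x) := by
      rw [star_mulVec, hMpd.isHermitian.inv.eq]
    rw [h5, hMx]
    rw [star_smul, dotProduct_smul, dotProduct_comm u (star u), ← hsdef, hsre]
    simp only [star_trivial, RCLike.star_def, Complex.conj_ofReal, smul_eq_mul,
      Complex.real_smul]
    push_cast
    ring
  rw [htr]
  rw [Complex.norm_real, Real.norm_eq_abs, abs_of_nonneg (by positivity)]
  -- final arithmetic
  have h1 : v * (1 + v * cr)⁻¹ * sr ≤ 1 / ξ := by
    rw [div_eq_mul_inv, one_mul]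
    have hsrc : sr ≤ cr / ξ := by
      rw [le_div_iff₀ hξ]
      linarith [hkey]
    have h2 : v * (1 + v * cr)⁻¹ * sr ≤ v * (1 + v * cr)⁻¹ * (cr / ξ) := by
      apply mul_le_mul_of_nonneg_left hsrc
      positivity
    refine h2.trans ?_
    rw [div_eq_mul_inv]
    have h3 : v * (1 + v * cr)⁻¹ * (cr * ξ⁻¹) = (v * cr) * (1 + v * cr)⁻¹ * ξ⁻¹ := by ring
    rw [h3]
    have h4 : (v * cr) * (1 + v * cr)⁻¹ ≤ 1 := by
      rw [mul_inv_le_iff₀ hone, one_mul]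
      linarith
    calc (v * cr) * (1 + v * cr)⁻¹ * ξ⁻¹ ≤ 1 * ξ⁻¹ := by
          apply mul_le_mul_of_nonneg_right h4
          positivity
      _ = ξ⁻¹ := one_mul _
  have h2 : (1:ℝ) / ξ ≤ 2 / ξ := by
    gcongr; norm_num
  linarith
end
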